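/- If the symbolic valuation bounds V̂[a] and V̂[a'] are admissible, then the propagated bound V̂[a ∘ a'], consisting of tuples (s, s''', l+l', u+u') for all (s, s', l, u) ∈ V̂[a] and (s'', s''', l', u') ∈ V̂[a'] with s' ⊆ s'', together with tuples (s, s''', l+l', ∞) for pairs with s' ∩ s'' ≠ ∅, is an admissible symbolic valuation bound for the concatenated operator a ∘ a'. -/

import Mathlib

open scoped ENNReal NNReal

/-- Valuation of a set of paths. -/
noncomputable def pathVal {X P : Type*} (src tgt : P → X) (C : P → ℝ≥0)
    (A : Set P) (x x' : X) : ℝ≥0∞ :=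
  ⨅ σ ∈ {σ ∈ A | src σ = x ∧ tgt σ = x'}, (C σ : ℝ≥0∞)

/-- Admissibility of a symbolic valuation bound, per-path form:
(i) every path in `A` is covered by a tuple whose lower bound is below its cost;
(ii) every tuple's upper bound dominates `sup_{x∈s₀} inf_{x'∈s₁} V[A](x,x')`. -/
def AdmissibleBound {X P : Type*} (src tgt : P → X) (C : P → ℝ≥0)
    (A : Set P) (Vhat : Set (Set X × Set X × ℝ≥0∞ × ℝ≥0∞)) : Prop :=
  (∀ σ ∈ A, ∃ T ∈ Vhat, src σ ∈ T.1 ∧ tgt σ ∈ T.2.1 ∧ T.2.2.1 ≤ (C σ : ℝ≥0∞)) ∧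
  (∀ T ∈ Vhat, (⨆ x ∈ T.1, ⨅ x' ∈ T.2.1, pathVal src tgt C A x x') ≤ T.2.2.2)

/-- The valuation of a concatenation is bounded by the sum of valuations through
any intermediate point. -/
lemma pathVal_comp_le {X P : Type*} (src tgt : P → X) (C : P → ℝ≥0)
    (comp : P → P → P)
    (hsrc : ∀ σ σ' : P, tgt σ = src σ' → src (comp σ σ') = src σ)
    (htgt : ∀ σ σ' : P, tgt σ = src σ' → tgt (comp σ σ') = tgt σ')
    (hadd : ∀ σ σ' : P, tgt σ = src σ' → C (comp σ σ') = C σ + C σ')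
    (a a' : Set P) (x x' x''' : X) :
    pathVal src tgt C {τ | ∃ σ ∈ a, ∃ σ' ∈ a', tgt σ = src σ' ∧ τ = comp σ σ'} x x''' ≤
      pathVal src tgt C a x x' + pathVal src tgt C a' x' x''' := by
  rw [pathVal, pathVal, pathVal]
  simp only [iInf_subtype', ENNReal.iInf_add, ENNReal.add_iInf]
  refine le_iInf fun ⟨σ', hσ', hs', ht'⟩ => le_iInf fun ⟨σ, hσ, hs, ht⟩ => ?_
  have hmid : tgt σ = src σ' := by rw [ht, hs']
  have hmem : comp σ σ' ∈ {σ_1 ∈ {τ | ∃ σ ∈ a, ∃ σ' ∈ a', tgt σ = src σ' ∧ τ = comp σ σ'} |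
      src σ_1 = x ∧ tgt σ_1 = x'''} := by
    refine ⟨⟨σ, hσ, σ', hσ', hmid, rfl⟩, ?_, ?_⟩
    · rw [hsrc σ σ' hmid, hs]
    · rw [htgt σ σ' hmid, ht']
  calc ⨅ τ : {τ // τ ∈ _}, ((C τ.1 : ℝ≥0∞))
      ≤ (C (comp σ σ') : ℝ≥0∞) := iInf_le (fun τ : {τ // τ ∈ {σ_1 ∈ {τ | ∃ σ ∈ a, ∃ σ' ∈ a', tgt σ = src σ' ∧ τ = comp σ σ'} |
        src σ_1 = x ∧ tgt σ_1 = x'''}} => (C τ.1 : ℝ≥0∞)) ⟨comp σ σ', hmem⟩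
    _ = (C σ : ℝ≥0∞) + (C σ' : ℝ≥0∞) := by rw [hadd σ σ' hmid]; push_cast; ring

/-- if `V̂[a]` and `V̂[a']` are admissible, then the propagated bound
for the concatenation `a ∘ a'` is admissible. -/
theorem propagation_admissible
    {X P : Type*} (src tgt : P → X) (C : P → ℝ≥0)
    (comp : P → P → P)
    (hsrc : ∀ σ σ' : P, tgt σ = src σ' → src (comp σ σ') = src σ)
    (htgt : ∀ σ σ' : P, tgt σ = src σ' → tgt (comp σ σ') = tgt σ')
    (hadd : ∀ σ σ' : P, tgt σ = src σ' → C (comp σ σ') = C σ + C σ')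
    (a a' : Set P) (Vhat Vhat' : Set (Set X × Set X × ℝ≥0∞ × ℝ≥0∞))
    (h : AdmissibleBound src tgt C a Vhat)
    (h' : AdmissibleBound src tgt C a' Vhat') :
    AdmissibleBound src tgt C
      {τ | ∃ σ ∈ a, ∃ σ' ∈ a', tgt σ = src σ' ∧ τ = comp σ σ'}
      ({T | ∃ s s' l u, (s, s', l, u) ∈ Vhat ∧
          ∃ s'' s''' l' u', (s'', s''', l', u') ∈ Vhat' ∧
            s' ⊆ s'' ∧ T = (s, s''', l + l', u + u')} ∪
       {T | ∃ s s' l u, (s, s', l, u) ∈ Vhat ∧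
          ∃ s'' s''' l' u', (s'', s''', l', u') ∈ Vhat' ∧
            (s' ∩ s'').Nonempty ∧ T = (s, s''', l + l', (∞ : ℝ≥0∞))}) := by
  obtain ⟨h1, h2⟩ := h
  obtain ⟨h1', h2'⟩ := h'
  constructor
  · -- condition (i)
    rintro τ ⟨σ, hσ, σ', hσ', hmid, rfl⟩
    obtain ⟨⟨s, s', l, u⟩, hT, hx1, hx2, hl⟩ := h1 σ hσ
    obtain ⟨⟨s'', s''', l', u'⟩, hT', hx1', hx2', hl'⟩ := h1' σ' hσ'
    refine ⟨(s, s''', l + l', (∞ : ℝ≥0∞)), Or.inr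
      ⟨s, s', l, u, hT, s'', s''', l', u', hT', ⟨tgt σ, hx2, hmid ▸ hx1'⟩, rfl⟩, ?_, ?_, ?_⟩
    · simpa [hsrc σ σ' hmid] using hx1
    · simpa [htgt σ σ' hmid] using hx2'
    · rw [hadd σ σ' hmid]
      push_cast
      exact add_le_add hl hl'
  · -- condition (ii)
    rintro T (⟨s, s', l, u, hT, s'', s''', l', u', hT', hsub, rfl⟩ |
      ⟨s, s', l, u, hT, s'', s''', l', u', hT', hne, rfl⟩)
    · simp only
      refine iSup₂_le fun x hx => ?_
      have key : ∀ x' ∈ s',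
          (⨅ x''' ∈ s''', pathVal src tgt C
            {τ | ∃ σ ∈ a, ∃ σ' ∈ a', tgt σ = src σ' ∧ τ = comp σ σ'} x x''') ≤
          pathVal src tgt C a x x' + u' := fun x' hx' => by
        calc (⨅ x''' ∈ s''', pathVal src tgt C _ x x''')
            ≤ ⨅ x''' ∈ s''', (pathVal src tgt C a x x' + pathVal src tgt C a' x' x''') :=
              iInf₂_mono fun x''' _ =>
                pathVal_comp_le src tgt C comp hsrc htgt hadd a a' x x' x'''
          _ = pathVal src tgt C a x x' + ⨅ x''' ∈ s''', pathVal src tgt C a' x' x''' := by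
              simp_rw [iInf_subtype', ENNReal.add_iInf]
          _ ≤ pathVal src tgt C a x x' + u' := by
              gcongr
              exact le_trans (le_iSup₂ (f := fun x'' (_ : x'' ∈ s'') =>
                ⨅ x''' ∈ s''', pathVal src tgt C a' x'' x''') x' (hsub hx')) (h2' _ hT')
      calc (⨅ x''' ∈ s''', pathVal src tgt C _ x x''')
          ≤ ⨅ x' ∈ s', (pathVal src tgt C a x x' + u') := le_iInf₂ key
        _ = (⨅ x' ∈ s', pathVal src tgt C a x x') + u' := by
            simp_rw [iInf_subtype', ENNReal.iInf_add]
        _ ≤ u + u' := by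
            gcongr
            exact le_trans (le_iSup₂ (f := fun x₀ (_ : x₀ ∈ s) =>
              ⨅ x' ∈ s', pathVal src tgt C a x₀ x') x hx) (h2 _ hT)
    · simp
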